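/- Let n ≥ 2 and let M be a Coxeter matrix on Fin n whose Coxeter group W has abelianization isomorphic to Z/2Z. Then there exist, for each k ∈ Fin (n−1), distinct vertices i_k, j_k ∈ Fin n and a word w_k in the free group on Fin n, such that the graph on Fin n whose edge set is {{i_k, j_k} : k ∈ Fin (n−1)} is connected (hence a tree), and the group presented by generators Fin n and the n−1 relators x_{i_k} · w_k · x_{j_k}⁻¹ · w_k⁻¹ admits a surjective group homomorphism onto W. -/

import Mathlib

open SimpleGraph

private lemma conj_helper {G : Type*} [Group G] (g h : G) (q : ℕ)
    (hg : g * g = 1) (hh : h * h = 1) (hr : (g * h) ^ (2 * q + 1) = 1) :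
    g * (h * g) ^ q * h⁻¹ * ((h * g) ^ q)⁻¹ = 1 := by
  have hhinv : h⁻¹ = h := inv_eq_of_mul_eq_one_left hh
  have hginv : g⁻¹ = g := inv_eq_of_mul_eq_one_left hg
  have hwinv : ((h * g) ^ q)⁻¹ = (g * h) ^ q := by
    rw [← inv_pow, mul_inv_rev, hginv, hhinv]
  have sc : h * (g * h) ^ q = (h * g) ^ q * h := by
    have hsc : SemiconjBy h (g * h) (h * g) := by
      unfold SemiconjBy; rw [← mul_assoc]
    exact (hsc.pow_right q).eq
  rw [hhinv, hwinv]
  calc g * (h * g) ^ q * h * (g * h) ^ q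
      = g * ((h * g) ^ q * h) * (g * h) ^ q := by rw [mul_assoc g]
    _ = g * (h * (g * h) ^ q) * (g * h) ^ q := by rw [sc]
    _ = (g * h) * ((g * h) ^ q * (g * h) ^ q) := by simp [mul_assoc]
    _ = (g * h) ^ (2 * q + 1) := by rw [← pow_add, pow_succ', two_mul]
    _ = 1 := hr

/-- The "odd" graph of a Coxeter matrix is connected when the abelianization is `ℤ/2`. -/
private lemma odd_graph_connected (n : ℕ) (hn : 2 ≤ n) (M : CoxeterMatrix (Fin n))
    (h : Nonempty (Abelianization M.Group ≃* Multiplicative (ZMod 2))) :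
    (SimpleGraph.mk (fun a b => a ≠ b ∧ Odd (M a b))
      ⟨fun a b hab => ⟨hab.1.symm, M.symmetric a b ▸ hab.2⟩⟩
      ⟨fun a ha => ha.1 rfl⟩).Connected := by
  classical
  obtain ⟨e⟩ := h
  set G : SimpleGraph (Fin n) := SimpleGraph.mk (fun a b => a ≠ b ∧ Odd (M a b))
      ⟨fun a b hab => ⟨hab.1.symm, M.symmetric a b ▸ hab.2⟩⟩
      ⟨fun a ha => ha.1 rfl⟩ with hG
  have hnonempty : Nonempty (Fin n) := ⟨⟨0, by omega⟩⟩
  set v0 : Fin n := ⟨0, by omega⟩ with hv0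
  rw [connected_iff]
  refine ⟨fun u v => ?_, hnonempty⟩
  suffices key : ∀ v, G.Reachable v0 v by exact (key u).symm.trans (key v)
  intro v
  by_contra hv
  have hA : ∀ x : Multiplicative (ZMod 2 × ZMod 2), x * x = 1 := by decide
  set x : Multiplicative (ZMod 2 × ZMod 2) := Multiplicative.ofAdd ((1, 0) : ZMod 2 × ZMod 2)
  set y : Multiplicative (ZMod 2 × ZMod 2) := Multiplicative.ofAdd ((0, 1) : ZMod 2 × ZMod 2)
  set f : Fin n → Multiplicative (ZMod 2 × ZMod 2) :=
    fun a => if G.Reachable v0 a then x else y with hf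
  have hlift : CoxeterMatrix.IsLiftable M f := by
    intro a b
    by_cases hfeq : f a = f b
    · rw [hfeq, hA (f b), one_pow]
    · have heven : ¬ Odd (M a b) := by
        intro hodd
        have hab : a ≠ b := fun hh => hfeq (by rw [hh])
        have hadj : G.Adj a b := ⟨hab, hodd⟩
        have hiff : G.Reachable v0 a ↔ G.Reachable v0 b :=
          ⟨fun r => r.trans hadj.reachable, fun r => r.trans hadj.symm.reachable⟩
        exact hfeq (by simp only [hf]; rw [if_congr hiff rfl rfl])
      obtain ⟨t, ht⟩ := Nat.not_odd_iff_even.mp heven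
      rw [show M a b = t + t from ht, pow_add, ← mul_pow, hA, one_pow]
  set cs := M.toCoxeterSystem
  set ψ : M.Group →* Multiplicative (ZMod 2 × ZMod 2) := cs.lift ⟨f, hlift⟩ with hψ
  have hψs : ∀ a, ψ (M.simple a) = f a := fun a => cs.lift_apply_simple hlift a
  have hψv0 : ψ (M.simple v0) = x := by
    rw [hψs]; simp only [hf]; rw [if_pos (Reachable.refl _)]
  have hψv : ψ (M.simple v) = y := by
    rw [hψs]; simp only [hf]; rw [if_neg hv]
  have key2 : ∀ w1 w2 : M.Group, Abelianization.of w1 = Abelianization.of w2 → ψ w1 = ψ w2 := by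
    intro w1 w2 hw
    have := congrArg (Abelianization.lift ψ) hw
    simpa using this
  have tri : ∀ a b c : Multiplicative (ZMod 2), a = b ∨ a = c ∨ b = c := by decide
  rcases tri (e (Abelianization.of 1)) (e (Abelianization.of (M.simple v0)))
      (e (Abelianization.of (M.simple v))) with hh | hh | hh
  · have := key2 _ _ (e.injective hh)
    rw [map_one, hψv0] at this
    exact (by decide : (1 : Multiplicative (ZMod 2 × ZMod 2)) ≠ x) this
  · have := key2 _ _ (e.injective hh)
    rw [map_one, hψv] at this
    exact (by decide : (1 : Multiplicative (ZMod 2 × ZMod 2)) ≠ y) this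
  · have := key2 _ _ (e.injective hh)
    rw [hψv0, hψv] at this
    exact (by decide : x ≠ y) this

/-- If `M` is a Coxeter matrix on `Fin n` (`n ≥ 2`) whose Coxeter group `W`
has abelianization isomorphic to `ℤ/2`, then there is a labeled oriented tree presentation on
`Fin n` (relators `x_{i_k} · w_k · x_{j_k}⁻¹ · w_k⁻¹`, the pairs `{i_k, j_k}` forming a
connected graph, hence a tree, on `Fin n`) whose group surjects onto `W`. -/
theorem stmt_4 (n : ℕ) (hn : 2 ≤ n) (M : CoxeterMatrix (Fin n))
    (h : Nonempty (Abelianization M.Group ≃* Multiplicative (ZMod 2))) :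
    ∃ (i j : Fin (n - 1) → Fin n) (w : Fin (n - 1) → FreeGroup (Fin n)),
      (∀ k, i k ≠ j k) ∧
      (SimpleGraph.fromEdgeSet (Set.range fun k => s(i k, j k))).Connected ∧
      ∃ φ : PresentedGroup
          (Set.range fun k => FreeGroup.of (i k) * w k * (FreeGroup.of (j k))⁻¹ * (w k)⁻¹)
          →* M.Group,
        Function.Surjective φ := by
  classical
  set G : SimpleGraph (Fin n) := SimpleGraph.mk (fun a b => a ≠ b ∧ Odd (M a b))
      ⟨fun a b hab => ⟨hab.1.symm, M.symmetric a b ▸ hab.2⟩⟩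
      ⟨fun a ha => ha.1 rfl⟩ with hG
  have hGconn : G.Connected := odd_graph_connected n hn M h
  have hnonempty : Nonempty (Fin n) := ⟨⟨0, by omega⟩⟩
  set v0 : Fin n := ⟨0, by omega⟩ with hv0
  -- parents
  have hpar : ∀ v : Fin n, v ≠ v0 → ∃ u, G.Adj u v ∧ G.dist v0 u < G.dist v0 v := by
    intro v hv
    have hd : G.dist v0 v ≠ 0 := by
      rw [SimpleGraph.dist_ne_zero_iff_ne_and_reachable]
      exact ⟨hv.symm, hGconn v0 v⟩
    obtain ⟨p, hp⟩ := SimpleGraph.exists_walk_of_dist_ne_zero hd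
    obtain ⟨u, hadj, p', hp'⟩ := SimpleGraph.Walk.exists_eq_cons_of_ne hv p.reverse
    refine ⟨u, hadj.symm, ?_⟩
    have h1 : G.dist v0 u ≤ p'.length := by
      rw [SimpleGraph.dist_comm]; exact SimpleGraph.dist_le p'
    have h2 : p'.length + 1 = G.dist v0 v := by
      have : p.reverse.length = p'.length + 1 := by rw [hp']; simp
      rw [SimpleGraph.Walk.length_reverse] at this
      omega
    omega
  choose par hpar1 hpar2 using hpar
  -- enumerate the non-base vertices
  have hcard : Fintype.card {v : Fin n // v ≠ v0} = n - 1 := by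
    rw [Fintype.card_subtype_compl, Fintype.card_subtype_eq, Fintype.card_fin]
  let c : Fin (n - 1) ≃ {v : Fin n // v ≠ v0} := (Fintype.equivFinOfCardEq hcard).symm
  let par' : {v : Fin n // v ≠ v0} → Fin n := fun z => par z.1 z.2
  set ifun : Fin (n - 1) → Fin n := fun k => par' (c k) with hifun
  set jfun : Fin (n - 1) → Fin n := fun k => (c k).1 with hjfun
  have hadjk : ∀ k, G.Adj (ifun k) (jfun k) := fun k => hpar1 (c k).1 (c k).2
  set q : Fin (n - 1) → ℕ := fun k => (M (ifun k) (jfun k) - 1) / 2 with hqdef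
  set wfun : Fin (n - 1) → FreeGroup (Fin n) :=
    fun k => (FreeGroup.of (jfun k) * FreeGroup.of (ifun k)) ^ (q k) with hwfun
  have hq : ∀ k, 2 * q k + 1 = M (ifun k) (jfun k) := by
    intro k
    obtain ⟨t, ht⟩ := (hadjk k).2
    simp only [hqdef]
    omega
  refine ⟨ifun, jfun, wfun, fun k => (hadjk k).1, ?_, ?_⟩
  · -- connectivity of the tree graph
    set H := SimpleGraph.fromEdgeSet (Set.range fun k => s(ifun k, jfun k)) with hH
    have hHadj : ∀ (v : Fin n) (hv : v ≠ v0), H.Adj (par v hv) v := by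
      intro v hv
      rw [hH, SimpleGraph.fromEdgeSet_adj]
      constructor
      · refine ⟨c.symm ⟨v, hv⟩, ?_⟩
        simp only [hifun, hjfun, Equiv.apply_symm_apply]
        rfl
      · exact (hpar1 v hv).1
    rw [connected_iff]
    refine ⟨fun a b => ?_, hnonempty⟩
    suffices hkey : ∀ v, H.Reachable v v0 by exact (hkey a).trans (hkey b).symm
    have main : ∀ d, ∀ v, G.dist v0 v ≤ d → H.Reachable v v0 := by
      intro d
      induction d with
      | zero =>
        intro v hd
        have : v0 = v := ((hGconn v0 v).dist_eq_zero_iff).mp (Nat.le_zero.mp hd)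
        exact this ▸ SimpleGraph.Reachable.refl _
      | succ d ih =>
        intro v hd
        by_cases hv : v = v0
        · exact hv ▸ SimpleGraph.Reachable.refl _
        · have hlt := hpar2 v hv
          have := ih (par v hv) (by omega)
          exact ((hHadj v hv).reachable).symm.trans this
    exact fun v => main (G.dist v0 v) v le_rfl
  · -- the homomorphism
    have hs2 : ∀ a, M.simple a * M.simple a = 1 := M.toCoxeterSystem.simple_mul_simple_self
    have hspow : ∀ a b, (M.simple a * M.simple b) ^ (M a b) = 1 :=
      M.toCoxeterSystem.simple_mul_simple_pow
    have hrel : ∀ r ∈ (Set.range fun k =>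
        FreeGroup.of (ifun k) * wfun k * (FreeGroup.of (jfun k))⁻¹ * (wfun k)⁻¹),
        FreeGroup.lift M.simple r = 1 := by
      rintro r ⟨k, rfl⟩
      simp only [hwfun, map_mul, map_inv, map_pow, FreeGroup.lift_apply_of]
      exact conj_helper (M.simple (ifun k)) (M.simple (jfun k)) (q k)
        (hs2 _) (hs2 _) (by rw [hq k]; exact hspow _ _)
    refine ⟨PresentedGroup.toGroup hrel, ?_⟩
    intro y
    obtain ⟨z, rfl⟩ := PresentedGroup.mk_surjective M.relationsSet y
    refine ⟨PresentedGroup.mk _ z, ?_⟩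
    have hcomp : ((PresentedGroup.toGroup hrel).comp (PresentedGroup.mk _)) =
        PresentedGroup.mk M.relationsSet := by
      apply FreeGroup.ext_hom
      intro a
      simp only [MonoidHom.comp_apply]
      exact PresentedGroup.toGroup.of hrel
    exact DFunLike.congr_fun hcomp z
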